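/- Let p be a prime and A a commutative ring with p·A = 0 that is Frobenius separated. If 𝔞 ⊆ A is an ideal with 𝔞 = 𝔞² and such that there exists m ≥ 1 with x^m = 0 for all x ∈ 𝔞 (bounded nilpotence), then 𝔞 = 0. -/

import Mathlib

/-- The ideal `ker(F_R^n) = {x : R | x^(p^n) = 0}` of a ring of characteristic `p`
(realized as the ideal generated by that set). -/
def frobeniusPowerKernel (p : ℕ) (R : Type*) [CommRing R] (n : ℕ) : Ideal R :=
  Ideal.span {x : R | x ^ p ^ n = 0}

/-- A ring `R` (of characteristic `p`) is Frobenius separated if for every `n ≥ 1`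
the intersection of all powers of `ker(F_R^n)` is zero. -/
def IsFrobeniusSeparated (p : ℕ) (R : Type*) [CommRing R] : Prop :=
  ∀ n : ℕ, 1 ≤ n → (⨅ m ≥ 1, frobeniusPowerKernel p R n ^ m) = ⊥

/-- Characteristic `p` case of Lemma C.5: in a Frobenius separated ring of
characteristic `p`, an idempotent and bounded nilpotent ideal is zero. -/
theorem ideal_eq_bot_of_idempotent_of_boundedNilpotent_charP
    (p : ℕ) (hp : p.Prime) (A : Type*) [CommRing A]
    (hpA : (p : A) = 0) (hA : IsFrobeniusSeparated p A)
    (𝔞 : Ideal A) (hidem : 𝔞 = 𝔞 ^ 2)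
    (m : ℕ) (hm : 1 ≤ m) (hbd : ∀ x ∈ 𝔞, x ^ m = 0) :
    𝔞 = ⊥ := by
  -- choose n = m; then p ^ m ≥ m
  have hmn : m ≤ p ^ m := le_trans (Nat.le_of_lt (Nat.lt_two_pow_self (n := m)))
    (Nat.pow_le_pow_left hp.two_le m)
  -- 𝔞 ⊆ ker F^m
  have hsub : 𝔞 ≤ frobeniusPowerKernel p A m := by
    intro x hx
    apply Ideal.subset_span
    show x ^ p ^ m = 0
    obtain ⟨k, hk⟩ := Nat.exists_eq_add_of_le hmn
    rw [hk, pow_add, hbd x hx, zero_mul]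
  -- 𝔞 = 𝔞 ^ k for all k ≥ 1
  have hpow : ∀ k : ℕ, 1 ≤ k → 𝔞 = 𝔞 ^ k := by
    intro k hk
    induction k with
    | zero => omega
    | succ k ih =>
      rcases Nat.eq_or_lt_of_le hk with h | h
      · simp [← h]
      · have h1 : 1 ≤ k := Nat.lt_succ_iff.mp h
        calc 𝔞 = 𝔞 ^ 2 := hidem
        _ = 𝔞 * 𝔞 := sq 𝔞
        _ = 𝔞 ^ k * 𝔞 := by rw [← ih h1]
        _ = 𝔞 ^ (k + 1) := (pow_succ 𝔞 k).symm
  -- 𝔞 ≤ ⨅ ...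
  have : 𝔞 ≤ ⨅ k ≥ 1, frobeniusPowerKernel p A m ^ k := by
    apply le_iInf; intro k; apply le_iInf; intro hk
    calc 𝔞 = 𝔞 ^ k := hpow k hk
    _ ≤ frobeniusPowerKernel p A m ^ k := Ideal.pow_right_mono hsub k
  rw [hA m hm] at this
  exact le_bot_iff.mp this
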